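/- Let L > 0 and let n ≥ 256L² be an integer. Let z = u + iv with u real and v ∈ (0,1), let G_Φ(z) = (z − √(z²−4))/2 and G₂(z) = (z + √(z²−4))/2 (the two roots of G² − zG + 1 = 0, with the branch of √(z²−4) on the upper half-plane satisfying √(z²−4) ∼ z as z → ∞). Suppose φ is holomorphic on the closed disc {|w| ≤ 2} and |φ(w)| ≤ 128 L³/√n for all |w| ≤ 2. Then for every complex G with |G − G_Φ(z)| = √v, | G·φ(G) / (G₂(z) − G) | ≤ (512 L³/√n) · ((u²−4)² + 2u²v²)^{−1/4}. -/

import Mathlib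

open MeasureTheory Complex Set

/-- The Cauchy transform of a measure on ℝ: `G_μ(z) = ∫ dμ(t)/(z−t)`. -/
noncomputable def cauchyT (μ : Measure ℝ) (z : ℂ) : ℂ := ∫ t : ℝ, (z - (t : ℂ))⁻¹ ∂μ

/-- The cumulative distribution function of a measure on ℝ. -/
noncomputable def cdfOf (μ : Measure ℝ) (x : ℝ) : ℝ := (μ (Set.Iic x)).toReal

/-- The cumulative distribution function of the standard semicircle law. -/
noncomputable def semicircleCDF (x : ℝ) : ℝ :=
  (1 / Real.pi) * ∫ t in Set.Iic x,
    Set.indicator (Set.Icc (-2 : ℝ) 2) (fun s => Real.sqrt (4 - s ^ 2)) t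

/-- The branch of `√(z²−4)` holomorphic on the upper half-plane with `√(z²−4) ∼ z`
as `z → ∞`, given by `√(z−2)·√(z+2)` with principal square roots. -/
noncomputable def sqrtBr (z : ℂ) : ℂ := (z - 2) ^ ((1 : ℂ) / 2) * (z + 2) ^ ((1 : ℂ) / 2)

/-- The Cauchy transform of the semicircle law: `G_Φ(z) = (z − √(z²−4))/2`. -/
noncomputable def Gsc (z : ℂ) : ℂ := (z - sqrtBr z) / 2


/-- The other root of `G² − zG + 1 = 0`: `G₂(z) = (z + √(z²−4))/2`. -/
noncomputable def Gsc2 (z : ℂ) : ℂ := (z + sqrtBr z) / 2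

lemma sq_half_cpow {w : ℂ} (hw : w ≠ 0) : (w ^ ((1:ℂ)/2)) ^ 2 = w := by
  rw [sq, ← Complex.cpow_add _ _ hw]
  norm_num

lemma half_cpow_pos {w : ℂ} (hw : 0 < w.im) :
    0 < (w ^ ((1:ℂ)/2)).re ∧ 0 < (w ^ ((1:ℂ)/2)).im := by
  have hw0 : w ≠ 0 := fun h => by simp [h] at hw
  have hlt : |w.re| < ‖w‖ := Complex.abs_re_lt_norm.2 hw.ne'
  have habs : 0 < ‖w‖ := (abs_nonneg w.re).trans_lt hlt
  have harg0 : 0 < w.arg := by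
    rw [Complex.arg_of_im_pos hw]
    exact Real.arccos_pos.2 (by rw [div_lt_one habs]; exact (le_abs_self _).trans_lt hlt)
  have harg1 : w.arg < Real.pi := Complex.arg_lt_pi_iff.2 (Or.inr hw.ne')
  rw [Complex.cpow_def_of_ne_zero hw0]
  have him : (Complex.log w * ((1:ℂ)/2)).im = w.arg / 2 := by
    simp [Complex.mul_im, Complex.log_im, Complex.log_re]
    ring
  constructor
  · rw [Complex.exp_re, him]
    have : 0 < Real.cos (w.arg / 2) :=
      Real.cos_pos_of_mem_Ioo ⟨by linarith [Real.pi_pos], by linarith⟩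
    positivity
  · rw [Complex.exp_im, him]
    have : 0 < Real.sin (w.arg / 2) :=
      Real.sin_pos_of_pos_of_lt_pi (by linarith) (by linarith)
    positivity

lemma re_conj_mul_sqrtBr_nonneg {z : ℂ} (hz : 0 < z.im) :
    0 ≤ ((starRingEnd ℂ) z * sqrtBr z).re := by
  set a := (z - 2) ^ ((1:ℂ)/2) with ha
  set b := (z + 2) ^ ((1:ℂ)/2) with hb
  have hz1 : (0:ℝ) < (z - 2).im := by simpa using hz
  have hz2 : (0:ℝ) < (z + 2).im := by simpa using hz
  obtain ⟨hp, hq⟩ := half_cpow_pos hz1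
  obtain ⟨hr, ht⟩ := half_cpow_pos hz2
  have ha2 : a ^ 2 = z - 2 := sq_half_cpow (fun h => by simp [h] at hz1)
  have hb2 : b ^ 2 = z + 2 := sq_half_cpow (fun h => by simp [h] at hz2)
  have hC1 : a.re ^ 2 - a.im ^ 2 = z.re - 2 := by
    have := congrArg Complex.re ha2
    simpa [pow_two, Complex.mul_re] using this
  have hC2 : a.re * a.im + a.im * a.re = z.im := by
    have := congrArg Complex.im ha2
    simpa [pow_two, Complex.mul_im] using this
    
  have hC3 : b.re ^ 2 - b.im ^ 2 = z.re + 2 := by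
    have := congrArg Complex.re hb2
    simpa [pow_two, Complex.mul_re] using this
  have hC4 : b.re * b.im + b.im * b.re = z.im := by
    have := congrArg Complex.im hb2
    simpa [pow_two, Complex.mul_im] using this
  have hre : ((starRingEnd ℂ) z * sqrtBr z).re
      = z.re * (a.re * b.re - a.im * b.im) + z.im * (a.re * b.im + a.im * b.re) := by
    rw [sqrtBr, ← ha, ← hb]; simp [Complex.mul_re, Complex.mul_im]
  rw [hre]
  set p := a.re; set q := a.im; set r := b.re; set t := b.im
  have key : 2 * (z.re * (p * r - q * t) + z.im * (p * t + q * r))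
      = (p^2 + q^2 + r^2 + t^2) * (p * r + q * t) := by
    linear_combination (-(p*r - q*t)) * hC1 + (-(p*t + q*r)) * hC2 + (-(p*r - q*t)) * hC3
      + (-(p*t + q*r)) * hC4
  nlinarith [mul_pos hp hr, mul_pos hq ht, sq_nonneg p, sq_nonneg q, sq_nonneg r, sq_nonneg t,
    mul_nonneg (add_nonneg (add_nonneg (add_nonneg (sq_nonneg p) (sq_nonneg q)) (sq_nonneg r)) (sq_nonneg t)) (add_pos (mul_pos hp hr) (mul_pos hq ht)).le]

lemma sqrtBr_sq {z : ℂ} (hz : 0 < z.im) : sqrtBr z ^ 2 = z ^ 2 - 4 := by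
  have h1 : (z - 2) ≠ 0 := fun h => by simp [Complex.ext_iff] at h; simp [h.2] at hz
  have h2 : (z + 2) ≠ 0 := fun h => by simp [Complex.ext_iff] at h; simp [h.2] at hz
  have := sq_half_cpow h1
  have := sq_half_cpow h2
  calc sqrtBr z ^ 2 = ((z-2) ^ ((1:ℂ)/2)) ^ 2 * ((z+2) ^ ((1:ℂ)/2)) ^ 2 := by
        rw [sqrtBr]; ring
    _ = (z - 2) * (z + 2) := by rw [sq_half_cpow h1, sq_half_cpow h2]
    _ = z ^ 2 - 4 := by ring

lemma abs_Gsc_le_one {z : ℂ} (hz : 0 < z.im) : ‖Gsc z‖ ≤ 1 := by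
  have hmul : Gsc z * Gsc2 z = 1 := by
    have hs := sqrtBr_sq hz
    rw [Gsc, Gsc2]
    field_simp
    linear_combination -hs
  have habs : ‖Gsc z‖ * ‖Gsc2 z‖ = 1 := by
    rw [← norm_mul, hmul, norm_one]
  have hle : ‖Gsc z‖ ≤ ‖Gsc2 z‖ := by
    have hre := re_conj_mul_sqrtBr_nonneg hz
    simp only [Complex.mul_re, Complex.conj_re, Complex.conj_im] at hre
    have hns : Complex.normSq (z - sqrtBr z) ≤ Complex.normSq (z + sqrtBr z) := by
      simp only [Complex.normSq_apply, Complex.sub_re, Complex.sub_im, Complex.add_re,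
        Complex.add_im]
      nlinarith [hre]
    have habs2 : ‖z - sqrtBr z‖ ≤ ‖z + sqrtBr z‖ := by
      rw [Complex.norm_def, Complex.norm_def]
      exact Real.sqrt_le_sqrt hns
    rw [Gsc, Gsc2, norm_div, norm_div]
    gcongr
  nlinarith [norm_nonneg (Gsc z), norm_nonneg (Gsc2 z)]

theorem Mk_bound (L : ℝ) (hL : 0 < L) (n : ℕ) (hn : 256 * L ^ 2 ≤ n)
    (u v : ℝ) (hv : v ∈ Set.Ioo (0 : ℝ) 1) (φ : ℂ → ℂ)
    (hφhol : DifferentiableOn ℂ φ (Metric.closedBall 0 2))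
    (hφb : ∀ w : ℂ, ‖w‖ ≤ 2 → ‖φ w‖ ≤ 128 * L ^ 3 / Real.sqrt n)
    (G : ℂ) (hG : ‖G - Gsc ((u : ℂ) + (v : ℂ) * I)‖ = Real.sqrt v) :
    ‖G * φ G / (Gsc2 ((u : ℂ) + (v : ℂ) * I) - G)‖
      ≤ (512 * L ^ 3 / Real.sqrt n) *
          ((u ^ 2 - 4) ^ 2 + 2 * u ^ 2 * v ^ 2) ^ (-(1 / 4) : ℝ) := by
  obtain ⟨hv0, hv1⟩ := hv
  set z : ℂ := (u : ℂ) + (v : ℂ) * I with hzdef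
  have hzim : z.im = v := by simp [hzdef]
  have hzre : z.re = u := by simp [hzdef]
  have hz : 0 < z.im := by rw [hzim]; exact hv0
  -- sqrt n positive
  have hn0 : (0:ℝ) < (n:ℝ) := lt_of_lt_of_le (by positivity) hn
  have hsn : 0 < Real.sqrt n := Real.sqrt_pos.2 hn0
  -- |G| ≤ 2
  have hsv1 : Real.sqrt v ≤ 1 := by
    rw [show (1:ℝ) = Real.sqrt 1 by simp]
    exact Real.sqrt_le_sqrt hv1.le
  have hG2 : ‖G‖ ≤ 2 := by
    have h1 : ‖G‖ ≤ ‖G - Gsc z‖ + ‖Gsc z‖ := by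
      calc ‖G‖ = ‖(G - Gsc z) + Gsc z‖ := by ring_nf
        _ ≤ _ := norm_add_le _ _
    have := abs_Gsc_le_one hz
    rw [hG] at h1
    linarith
  -- |sqrtBr z|
  set S := ‖sqrtBr z‖ with hSdef
  have hS0 : 0 ≤ S := norm_nonneg _
  have hS4 : S ^ 4 = (u ^ 2 - 4) ^ 2 + (2 * u ^ 2 + 8) * v ^ 2 + v ^ 4 := by
    have h1 : S ^ 2 = ‖z ^ 2 - 4‖ := by
      rw [hSdef, ← norm_pow, sqrtBr_sq hz]
    have hre : (z ^ 2 - 4).re = u ^ 2 - v ^ 2 - 4 := by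
      simp [hzdef, pow_two, Complex.mul_re]
      try ring
    have him : (z ^ 2 - 4).im = 2 * u * v := by
      simp [hzdef, pow_two, Complex.mul_im]
      try ring
    have h2 : S ^ 4 = Complex.normSq (z ^ 2 - 4) := by
      rw [show (4:ℕ) = 2 * 2 from rfl, pow_mul, h1, Complex.sq_norm]
    rw [h2, Complex.normSq_apply, hre, him]
    ring
  -- A and a
  set A := (u ^ 2 - 4) ^ 2 + 2 * u ^ 2 * v ^ 2 with hAdef
  have hA : 0 < A := by
    rcases eq_or_ne u 0 with h | h
    · rw [hAdef, h]; norm_num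
    · have : 0 < 2 * u ^ 2 * v ^ 2 := by positivity
      nlinarith [sq_nonneg (u ^ 2 - 4)]
  set a := A ^ ((1:ℝ)/4) with hadef
  have ha : 0 < a := Real.rpow_pos_of_pos hA _
  have ha4 : a ^ 4 = A := by
    rw [hadef, ← Real.rpow_natCast (A ^ ((1:ℝ)/4)) 4, ← Real.rpow_mul hA.le]
    norm_num
  -- a/2 + √v ≤ S
  have hSa : a / 2 + Real.sqrt v ≤ S := by
    set sv := Real.sqrt v with hsvdef
    have hsv0 : 0 ≤ sv := Real.sqrt_nonneg v
    have hsv2 : sv ^ 2 = v := Real.sq_sqrt hv0.le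
    have ha4' : a ^ 4 = (u ^ 2 - 4) ^ 2 + 2 * u ^ 2 * v ^ 2 := by rw [ha4]
    have hstep : (a / 2 + sv) ^ 4 ≤ a ^ 4 + 8 * sv ^ 4 := by
      nlinarith [sq_nonneg (a/2 - sv), sq_nonneg (a^2/4 - sv^2), sq_nonneg (a/2 + sv),
        sq_nonneg (a^2/4 + sv^2), ha.le, hsv0]
    have hpow : (a / 2 + sv) ^ 4 ≤ S ^ 4 := by
      have hv2 : sv ^ 4 = v ^ 2 := by rw [show (4:ℕ) = 2*2 from rfl, pow_mul, hsv2]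
      rw [hS4]
      nlinarith [pow_pos hv0 4, hstep, ha4', hv2]
    exact le_of_pow_le_pow_left₀ (by norm_num) hS0 hpow
  -- denominator lower bound
  have hden : a / 2 ≤ ‖Gsc2 z - G‖ := by
    have h1 : S ≤ ‖Gsc2 z - G‖ + ‖G - Gsc z‖ := by
      calc S = ‖(Gsc2 z - G) + (G - Gsc z)‖ := by
            rw [hSdef]; congr 1; rw [Gsc2, Gsc]; ring
        _ ≤ _ := norm_add_le _ _
    rw [hG] at h1
    linarith
  have hdenpos : 0 < ‖Gsc2 z - G‖ := lt_of_lt_of_le (by positivity) hden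
  -- numerator bound
  have hnum : ‖G * φ G‖ ≤ 256 * L ^ 3 / Real.sqrt n := by
    rw [norm_mul]
    calc ‖G‖ * ‖φ G‖
        ≤ 2 * (128 * L ^ 3 / Real.sqrt n) := by
          apply mul_le_mul hG2 (hφb G hG2) (norm_nonneg _) (by norm_num)
      _ = 256 * L ^ 3 / Real.sqrt n := by ring
  -- final
  rw [norm_div]
  have h2 : ‖G * φ G‖ / ‖Gsc2 z - G‖
      ≤ (256 * L ^ 3 / Real.sqrt n) / (a / 2) :=
    div_le_div₀ (by positivity) hnum (by positivity) hden
  have hrhs : (512 * L ^ 3 / Real.sqrt n) * A ^ (-(1 / 4) : ℝ)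
      = (256 * L ^ 3 / Real.sqrt n) / (a / 2) := by
    rw [show (-(1/4) : ℝ) = -((1:ℝ)/4) by norm_num, Real.rpow_neg hA.le, ← hadef]
    field_simp
    ring
  rw [hrhs]
  exact h2
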